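/- Lemma (Characterization of E and D, part d): if the dup labels occurring in a NetKAT program p are pairwise distinct, then for every label ℓ occurring in p there exist unique programs d and k such that (d, ℓ, k) ∈ D⟦p⟧ (i.e., exactly one triple in D⟦p⟧ carries the label ℓ). -/

import Mathlib

namespace NetKAT

/-- Packets: assignments of (natural-number) values to fields. -/
abbrev Packet (F : Type) := F → ℕ

/-- Histories: a nonempty list of packets, represented as (head packet, tail). -/
abbrev Hist (F : Type) := Packet F × List (Packet F)

/-- NetKAT predicates. -/
inductive Pred (F : Type) where
  | id : Pred F
  | drop : Pred F
  | test : F → ℕ → Pred F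
  | or : Pred F → Pred F → Pred F
  | and : Pred F → Pred F → Pred F
  | not : Pred F → Pred F
  deriving DecidableEq

/-- Labeled NetKAT programs: every occurrence of `dup` carries a label from `L`. -/
inductive LPol (F L : Type) where
  | filter : Pred F → LPol F L
  | mod : F → ℕ → LPol F L
  | union : LPol F L → LPol F L → LPol F L
  | seq : LPol F L → LPol F L → LPol F L
  | star : LPol F L → LPol F L
  | dup : L → LPol F L
  deriving DecidableEq

/-- Iterates of a packet-processing function. -/
def iterRel {F : Type} (f : Hist F → Set (Hist F)) : ℕ → Hist F → Set (Hist F)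
  | 0, h => {h}
  | i+1, h => ⋃ h' ∈ f h, iterRel f i h'

/-- Semantics of predicates (as filters on histories). -/
def predSem {F : Type} : Pred F → Hist F → Set (Hist F)
  | .id, h => {h}
  | .drop, _ => ∅
  | .test f n, h => if h.1 f = n then {h} else ∅
  | .or a b, h => predSem a h ∪ predSem b h
  | .and a b, h => ⋃ h' ∈ predSem a h, predSem b h'
  | .not a, h => {h} \ predSem a h

/-- Semantics of labeled NetKAT programs (labels do not affect the semantics). -/
def polSem {F L : Type} [DecidableEq F] : LPol F L → Hist F → Set (Hist F)
  | .filter a, h => predSem a h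
  | .mod f n, h => {(Function.update h.1 f n, h.2)}
  | .union p q, h => polSem p h ∪ polSem q h
  | .seq p q, h => ⋃ h' ∈ polSem p h, polSem q h'
  | .star p, h => ⋃ i : ℕ, iterRel (fun h' => polSem p h') i h
  | .dup _, h => {(h.1, h.1 :: h.2)}

/-- A program is dup-free if it contains no occurrence of `dup`. -/
def LPol.dupFree {F L : Type} : LPol F L → Prop
  | .filter _ => True
  | .mod _ _ => True
  | .union p q => p.dupFree ∧ q.dupFree
  | .seq p q => p.dupFree ∧ q.dupFree
  | .star p => p.dupFree
  | .dup _ => False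

/-- The list of dup labels occurring in a program. -/
def labelList {F L : Type} : LPol F L → List L
  | .filter _ => []
  | .mod _ _ => []
  | .union p q => labelList p ++ labelList q
  | .seq p q => labelList p ++ labelList q
  | .star p => labelList p
  | .dup l => [l]

variable {F L : Type} [DecidableEq F] [DecidableEq L]

/-- The local component `E⟦p⟧` of a program. -/
def EE : LPol F L → LPol F L
  | .filter a => .filter a
  | .mod f n => .mod f n
  | .union q r => .union (EE q) (EE r)
  | .seq q r => .seq (EE q) (EE r)
  | .star q => .star (EE q)
  | .dup _ => .filter .drop

/-- The global components `D⟦p⟧` of a program: a finite set of triples `(d, ℓ, k)`. -/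
def DD : LPol F L → Finset (LPol F L × L × LPol F L)
  | .filter _ => ∅
  | .mod _ _ => ∅
  | .union q r => DD q ∪ DD r
  | .seq q r =>
      (DD q).image (fun t => (t.1, t.2.1, LPol.seq t.2.2 r)) ∪
      (DD r).image (fun t => (LPol.seq (EE q) t.1, t.2.1, t.2.2))
  | .star q =>
      (DD q).image (fun t => (LPol.seq (EE (.star q)) t.1, t.2.1, LPol.seq t.2.2 (.star q)))
  | .dup l => {(.filter .id, l, .filter .id)}

/-- Observation function of the automaton `A(p)`, given the continuation map `κ`
(state `none` is the initial state `0`, state `some ℓ` is the label `ℓ`):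
`ε s pk = {pk' | [pk'] ∈ ⟦E⟦k_s⟧⟧ [pk]}`. -/
def obs (κ : Option L → LPol F L) (s : Option L) (pk : Packet F) : Set (Packet F) :=
  {pk' | ((pk', ([] : List (Packet F))) : Hist F) ∈
            polSem (EE (κ s)) ((pk, ([] : List (Packet F))) : Hist F)}

/-- Continuation function of the automaton `A(p)`, given the continuation map `κ`:
`δ s pk = {(pk', ℓ') | ∃ (d, ℓ', k) ∈ D⟦k_s⟧, [pk'] ∈ ⟦d⟧ [pk]}`. -/
def trans (κ : Option L → LPol F L) (s : Option L) (pk : Packet F) :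
    Set (Packet F × Option L) :=
  {q | ∃ l' d k, q.2 = some l' ∧ (d, l', k) ∈ DD (κ s) ∧
        ((q.1, ([] : List (Packet F))) : Hist F) ∈
          polSem d ((pk, ([] : List (Packet F))) : Hist F)}

/-- Acceptance of a guarded string `(pk_in, [pk₁, …, pk_n], pk_out)` from state `s`. -/
def accept (κ : Option L → LPol F L) :
    Option L → Packet F → List (Packet F) → Packet F → Prop
  | s, pkin, [], pkout => pkout ∈ obs κ s pkin
  | s, pkin, pk1 :: w, pkout =>
      ∃ s', (pk1, s') ∈ trans κ s pkin ∧ accept κ s' pk1 w pkout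

lemma label_of_mem_DD : ∀ (p : LPol F L) (d : LPol F L) (l : L) (k : LPol F L),
    (d, l, k) ∈ DD p → l ∈ labelList p := by
  intro p
  induction p with
  | filter a => simp [DD]
  | mod f n => simp [DD]
  | union q r ihq ihr =>
      intro d l k h
      simp only [DD, Finset.mem_union] at h
      simp only [labelList, List.mem_append]
      rcases h with h | h
      · exact Or.inl (ihq _ _ _ h)
      · exact Or.inr (ihr _ _ _ h)
  | seq q r ihq ihr =>
      intro d l k h
      simp only [DD, Finset.mem_union, Finset.mem_image] at h
      simp only [labelList, List.mem_append]
      rcases h with ⟨t, ht, he⟩ | ⟨t, ht, he⟩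
      · obtain ⟨t1, t2, t3⟩ := t
        simp only [Prod.mk.injEq] at he
        exact Or.inl (he.2.1 ▸ ihq _ _ _ ht)
      · obtain ⟨t1, t2, t3⟩ := t
        simp only [Prod.mk.injEq] at he
        exact Or.inr (he.2.1 ▸ ihr _ _ _ ht)
  | star q ih =>
      intro d l k h
      simp only [DD, Finset.mem_image] at h
      obtain ⟨⟨t1, t2, t3⟩, ht, he⟩ := h
      simp only [Prod.mk.injEq] at he
      exact he.2.1 ▸ ih _ _ _ ht
  | dup l' =>
      intro d l k h
      simp only [DD, Finset.mem_singleton, Prod.mk.injEq] at h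
      simp [labelList, h.2.1]

/-- **Characterization of E and D, part (d).** If the dup labels of `p` are pairwise
distinct, then for every label `ℓ` occurring in `p` there exist unique programs `d`
and `k` with `(d, ℓ, k) ∈ D⟦p⟧`. -/
theorem e_d_characterization_d [Fintype F] (p : LPol F L)
    (hnd : (labelList p).Nodup) :
    ∀ l ∈ labelList p,
      ∃! dk : LPol F L × LPol F L, (dk.1, l, dk.2) ∈ DD p := by
  induction p with
  | filter a => simp [labelList]
  | mod f n => simp [labelList]
  | union q r ihq ihr =>
      simp only [labelList, List.nodup_append] at hnd
      intro l hl
      simp only [labelList, List.mem_append] at hl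
      rcases hl with hl | hl
      · obtain ⟨⟨d, k⟩, hmem, huniq⟩ := ihq hnd.1 l hl
        refine ⟨(d, k), ?_, ?_⟩
        · simp only [DD, Finset.mem_union]; exact Or.inl hmem
        · rintro ⟨d', k'⟩ h
          simp only [DD, Finset.mem_union] at h
          rcases h with h | h
          · exact huniq _ h
          · exact absurd (label_of_mem_DD r _ _ _ h)
              (fun hr => hnd.2.2 l hl l hr rfl)
      · obtain ⟨⟨d, k⟩, hmem, huniq⟩ := ihr hnd.2.1 l hl
        refine ⟨(d, k), ?_, ?_⟩
        · simp only [DD, Finset.mem_union]; exact Or.inr hmem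
        · rintro ⟨d', k'⟩ h
          simp only [DD, Finset.mem_union] at h
          rcases h with h | h
          · exact absurd (label_of_mem_DD q _ _ _ h)
              (fun hq => hnd.2.2 l hq l hl rfl)
          · exact huniq _ h
  | seq q r ihq ihr =>
      simp only [labelList, List.nodup_append] at hnd
      intro l hl
      simp only [labelList, List.mem_append] at hl
      rcases hl with hl | hl
      · obtain ⟨⟨d, k⟩, hmem, huniq⟩ := ihq hnd.1 l hl
        refine ⟨(d, .seq k r), ?_, ?_⟩
        · simp only [DD, Finset.mem_union, Finset.mem_image]
          exact Or.inl ⟨(d, l, k), hmem, rfl⟩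
        · rintro ⟨d', k'⟩ h
          simp only [DD, Finset.mem_union, Finset.mem_image] at h
          rcases h with ⟨⟨t1, t2, t3⟩, ht, he⟩ | ⟨⟨t1, t2, t3⟩, ht, he⟩
          · simp only [Prod.mk.injEq] at he
            obtain ⟨he1, he2, he3⟩ := he
            subst he2
            have := huniq (t1, t3) ht
            simp only [Prod.mk.injEq] at this
            simp [← he1, ← he3, this.1, this.2]
          · simp only [Prod.mk.injEq] at he
            exact absurd (he.2.1 ▸ label_of_mem_DD r _ _ _ ht)
              (fun hr => hnd.2.2 l hl l hr rfl)
      · obtain ⟨⟨d, k⟩, hmem, huniq⟩ := ihr hnd.2.1 l hl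
        refine ⟨(.seq (EE q) d, k), ?_, ?_⟩
        · simp only [DD, Finset.mem_union, Finset.mem_image]
          exact Or.inr ⟨(d, l, k), hmem, rfl⟩
        · rintro ⟨d', k'⟩ h
          simp only [DD, Finset.mem_union, Finset.mem_image] at h
          rcases h with ⟨⟨t1, t2, t3⟩, ht, he⟩ | ⟨⟨t1, t2, t3⟩, ht, he⟩
          · simp only [Prod.mk.injEq] at he
            exact absurd (he.2.1 ▸ label_of_mem_DD q _ _ _ ht)
              (fun hq => hnd.2.2 l hq l hl rfl)
          · simp only [Prod.mk.injEq] at he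
            obtain ⟨he1, he2, he3⟩ := he
            subst he2
            have := huniq (t1, t3) ht
            simp only [Prod.mk.injEq] at this
            simp [← he1, ← he3, this.1, this.2]
  | star q ih =>
      simp only [labelList] at hnd ⊢
      intro l hl
      obtain ⟨⟨d, k⟩, hmem, huniq⟩ := ih hnd l hl
      refine ⟨(.seq (EE (.star q)) d, .seq k (.star q)), ?_, ?_⟩
      · simp only [DD, Finset.mem_image]
        exact ⟨(d, l, k), hmem, rfl⟩
      · rintro ⟨d', k'⟩ h
        simp only [DD, Finset.mem_image] at h
        obtain ⟨⟨t1, t2, t3⟩, ht, he⟩ := h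
        simp only [Prod.mk.injEq] at he
        obtain ⟨he1, he2, he3⟩ := he
        subst he2
        have := huniq (t1, t3) ht
        simp only [Prod.mk.injEq] at this
        simp [← he1, ← he3, this.1, this.2]
  | dup l' =>
      intro l hl
      simp only [labelList, List.mem_singleton] at hl
      subst hl
      refine ⟨(.filter .id, .filter .id), ?_, ?_⟩
      · simp [DD]
      · rintro ⟨d', k'⟩ h
        simp only [DD, Finset.mem_singleton, Prod.mk.injEq] at h
        simp [h.1, h.2.2]


end NetKAT
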